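/- If I is an n-absorbing ideal of a commutative ring R, then (√I)^n ⊆ I; that is, for any a₁,…,a_n ∈ √I the product a₁a₂⋯a_n lies in I. -/

import Mathlib

def IsNAbsorbing {R : Type*} [CommRing R] (I : Ideal R) (n : ℕ) : Prop :=
  ∀ a : Fin (n + 1) → R, (∏ j, a j) ∈ I →
    ∃ i, (∏ j ∈ Finset.univ.erase i, a j) ∈ I

namespace NAbsorbingAux

open Finset

/-- Product over `univ.erase p` reindexed along `succAbove`. -/
theorem prod_erase_succAbove {M : Type*} [CommMonoid M] {m : ℕ} (g : Fin (m + 1) → M)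
    (p : Fin (m + 1)) :
    ∏ j ∈ Finset.univ.erase p, g j = ∏ l : Fin m, g (p.succAbove l) := by
  have himg : Finset.image p.succAbove Finset.univ = Finset.univ.erase p := by
    ext j
    simp only [Finset.mem_image, Finset.mem_univ, true_and, Finset.mem_erase, and_true]
    exact Fin.exists_succAbove_eq_iff
  rw [← himg, Finset.prod_image (fun x _ y _ h => Fin.succAbove_right_injective h)]

theorem sum_erase_succAbove {M : Type*} [AddCommMonoid M] {m : ℕ} (g : Fin (m + 1) → M)
    (p : Fin (m + 1)) :
    ∑ j ∈ Finset.univ.erase p, g j = ∑ l : Fin m, g (p.succAbove l) := by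
  have himg : Finset.image p.succAbove Finset.univ = Finset.univ.erase p := by
    ext j
    simp only [Finset.mem_image, Finset.mem_univ, true_and, Finset.mem_erase, and_true]
    exact Fin.exists_succAbove_eq_iff
  rw [← himg, Finset.sum_image (fun x _ y _ h => Fin.succAbove_right_injective h)]

variable {R : Type*} [CommRing R]

/-- `x ∈ √I` implies `x ^ n ∈ I` for an `n`-absorbing ideal. -/
theorem pow_mem_of_mem_radical {I : Ideal R} {n : ℕ} (hn : 0 < n) (hI : IsNAbsorbing I n)
    {x : R} (hx : x ∈ I.radical) : x ^ n ∈ I := by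
  obtain ⟨n', rfl⟩ : ∃ n', n = n' + 1 := ⟨n - 1, by omega⟩
  obtain ⟨m, hm⟩ := Ideal.mem_radical_iff.mp hx
  clear hx
  induction m using Nat.strong_induction_on with
  | _ m ih =>
    rcases le_or_gt m (n' + 1) with h | h
    · have hx : x ^ (n' + 1) = x ^ m * x ^ (n' + 1 - m) := by
        rw [← pow_add]; congr 1; omega
      rw [hx]; exact Ideal.mul_mem_right _ I hm
    · set b : Fin (n' + 2) → R := Fin.cons (x ^ (m - (n' + 1))) (fun _ => x) with hb
      have hbprod : (∏ j, b j) ∈ I := by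
        have : (∏ j, b j) = x ^ m := by
          rw [Fin.prod_univ_succ]
          simp only [hb, Fin.cons_zero, Fin.cons_succ]
          rw [Finset.prod_const, Finset.card_univ, Fintype.card_fin, ← pow_add]
          congr 1; omega
        rw [this]; exact hm
      obtain ⟨i, hi⟩ := hI b hbprod
      rw [prod_erase_succAbove] at hi
      rcases Fin.eq_zero_or_eq_succ i with rfl | ⟨j, rfl⟩
      · have : (∏ l : Fin (n' + 1), b ((0 : Fin (n' + 2)).succAbove l)) = x ^ (n' + 1) := by
          simp [hb, Fin.succAbove_zero, Fin.cons_succ, Finset.prod_const]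
        rwa [this] at hi
      · have : (∏ l : Fin (n' + 1), b (j.succ.succAbove l)) = x ^ (m - 1) := by
        -- split off l = 0
          rw [Fin.prod_univ_succ]
          have h0 : b (j.succ.succAbove 0) = x ^ (m - (n' + 1)) := by
            rw [Fin.succ_succAbove_zero]; simp [hb]
          have hs : ∀ l : Fin n', b (j.succ.succAbove l.succ) = x := by
            intro l; rw [Fin.succ_succAbove_succ]; simp [hb]
          rw [h0]
          rw [Finset.prod_congr rfl (fun l _ => hs l), Finset.prod_const, ← pow_add]
          congr 1; simp; omega
        rw [this] at hi
        exact ih (m - 1) (by omega) hi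

/-! ### Monomial products -/

/-- `Pz z u = ∏ j, z j ^ u j`. -/
def Pz {N : ℕ} (z : Fin N → R) (u : Fin N → ℕ) : R := ∏ j, z j ^ u j

variable {N : ℕ} (z : Fin N → R)

theorem Pz_add (u v : Fin N → ℕ) : Pz z (u + v) = Pz z u * Pz z v := by
  simp [Pz, Pi.add_apply, pow_add, Finset.prod_mul_distrib]

theorem Pz_sum {M : ℕ} (γ : Fin M → Fin N → ℕ) :
    Pz z (∑ j, γ j) = ∏ j, Pz z (γ j) := by
  unfold Pz
  rw [Finset.prod_comm]
  refine Finset.prod_congr rfl fun i _ => ?_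
  rw [Finset.prod_pow_eq_pow_sum]
  congr 1
  simp [Finset.sum_apply]

/-- increment at one coordinate -/
def inc (u : Fin N → ℕ) (i : Fin N) : Fin N → ℕ := Function.update u i (u i + 1)

/-- decrement at one coordinate -/
def dec (u : Fin N → ℕ) (i : Fin N) : Fin N → ℕ := Function.update u i (u i - 1)

theorem Pz_update (u : Fin N → ℕ) (i : Fin N) (b : ℕ) :
    Pz z (Function.update u i b) = z i ^ b * ∏ j ∈ Finset.univ.erase i, z j ^ u j := by
  unfold Pz
  rw [← Finset.mul_prod_erase Finset.univ (fun j => z j ^ Function.update u i b j)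
    (Finset.mem_univ i)]
  simp only [Function.update_self]
  congr 1
  exact Finset.prod_congr rfl fun j hj => by
    rw [Function.update_of_ne (Finset.mem_erase.mp hj).1]

theorem Pz_split (u : Fin N → ℕ) (i : Fin N) :
    Pz z u = z i ^ u i * ∏ j ∈ Finset.univ.erase i, z j ^ u j := by
  unfold Pz
  rw [← Finset.mul_prod_erase Finset.univ (fun j => z j ^ u j) (Finset.mem_univ i)]

theorem Pz_inc (u : Fin N → ℕ) (i : Fin N) : Pz z (inc u i) = z i * Pz z u := by
  rw [inc, Pz_update, Pz_split z u i, pow_succ]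
  ring

theorem Pz_dec (u : Fin N → ℕ) (t : Fin N) (h : u t ≠ 0) :
    z t * Pz z (dec u t) = Pz z u := by
  rw [dec, Pz_update, Pz_split z u t, ← mul_assoc, ← pow_succ']
  congr 2
  omega

theorem sum_inc (u : Fin N → ℕ) (i : Fin N) : ∑ j, inc u i j = (∑ j, u j) + 1 := by
  unfold inc
  rw [Finset.sum_update_of_mem (Finset.mem_univ i), Finset.sdiff_singleton_eq_erase]
  rw [← Finset.add_sum_erase Finset.univ u (Finset.mem_univ i)]
  omega

theorem sum_dec (u : Fin N → ℕ) (t : Fin N) (h : u t ≠ 0) :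
    ∑ j, dec u t j = (∑ j, u j) - 1 := by
  unfold dec
  rw [Finset.sum_update_of_mem (Finset.mem_univ t), Finset.sdiff_singleton_eq_erase]
  rw [← Finset.add_sum_erase Finset.univ u (Finset.mem_univ t)]
  omega


/-! ### Partition of a multiindex into nonzero pieces -/

theorem part : ∀ (M : ℕ) (u : Fin N → ℕ), 0 < M → M ≤ ∑ j, u j →
    ∃ γ : Fin M → Fin N → ℕ, (∀ j, γ j ≠ 0) ∧ ∑ j, γ j = u := by
  intro M
  induction M with
  | zero => intro u h0 _; omega
  | succ M ih =>
    intro u _ hMu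
    rcases Nat.eq_zero_or_pos M with rfl | hM
    · refine ⟨fun _ => u, fun j h0 => ?_, by rw [Fin.sum_univ_one]⟩
      have hu0 : u = 0 := h0
      have hz : ∑ j, u j = 0 := by rw [hu0]; simp
      omega
    · have hex : ∃ i, u i ≠ 0 := by
        by_contra hc
        push_neg at hc
        have hz : ∑ j, u j = 0 := Finset.sum_eq_zero fun j _ => hc j
        omega
      obtain ⟨i, hi⟩ := hex
      have hdecsum : ∑ j, dec u i j = (∑ j, u j) - 1 := sum_dec u i hi
      obtain ⟨γ', hγ'0, hγ'sum⟩ := ih (dec u i) hM (by omega)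
      refine ⟨Fin.cons (Function.update (0 : Fin N → ℕ) i 1) γ', ?_, ?_⟩
      · intro j
        rcases Fin.eq_zero_or_eq_succ j with rfl | ⟨j', rfl⟩
        · rw [Fin.cons_zero]
          intro h0
          have h1 := congrFun h0 i
          simp [Function.update_self] at h1
        · rw [Fin.cons_succ]; exact hγ'0 j'
      · rw [Fin.sum_univ_succ]
        simp only [Fin.cons_zero, Fin.cons_succ]
        rw [hγ'sum]
        funext t
        by_cases ht : t = i
        · subst ht
          simp only [Pi.add_apply, Function.update_self, dec]
          omega
        · simp only [Pi.add_apply, Function.update_of_ne ht, dec, Pi.zero_apply]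
          omega

/-! ### One absorbing instance -/

theorem con {I : Ideal R} {n : ℕ} (hn : 0 < n) (hI : IsNAbsorbing I n)
    (u : Fin N → ℕ) (hu : n ≤ ∑ j, u j) (S : Finset (Fin N))
    (hprod : (∑ i ∈ S, z i) * Pz z u ∈ I) :
    Pz z u ∈ I ∨ ∃ t, u t ≠ 0 ∧ (∑ i ∈ S, z i) * Pz z (dec u t) ∈ I := by
  obtain ⟨n', rfl⟩ : ∃ n', n = n' + 1 := ⟨n - 1, by omega⟩
  obtain ⟨γ, hγ0, hγsum⟩ := part (n' + 1) u (by omega) hu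
  set σ : R := ∑ i ∈ S, z i with hσ
  set b : Fin (n' + 2) → R := Fin.cons σ (fun j => Pz z (γ j)) with hb
  have hbprod : (∏ j, b j) ∈ I := by
    rw [Fin.prod_univ_succ]
    simp only [hb, Fin.cons_zero, Fin.cons_succ]
    rw [← Pz_sum, hγsum]
    exact hprod
  obtain ⟨i, hi⟩ := hI b hbprod
  rw [prod_erase_succAbove] at hi
  rcases Fin.eq_zero_or_eq_succ i with rfl | ⟨j, rfl⟩
  · left
    have he : (∏ l : Fin (n' + 1), b ((0 : Fin (n' + 2)).succAbove l)) = Pz z u := by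
      rw [show ((0 : Fin (n' + 2)).succAbove) = Fin.succ from Fin.succAbove_zero]
      simp only [hb, Fin.cons_succ]
      rw [← Pz_sum, hγsum]
    rwa [he] at hi
  · right
    obtain ⟨t, ht⟩ : ∃ t, γ j t ≠ 0 := Function.ne_iff.mp (hγ0 j)
    have hut : γ j t ≤ u t := by
      have h1 : (∑ l, γ l) t = ∑ l, γ l t := Finset.sum_apply t Finset.univ γ
      have h2 : γ j t ≤ ∑ l, γ l t :=
        Finset.single_le_sum (f := fun l => γ l t) (fun l _ => Nat.zero_le _)
          (Finset.mem_univ j)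
      rw [← hγsum, h1]
      exact h2
    have hrest : (∏ l : Fin (n' + 1), b (j.succ.succAbove l))
        = σ * Pz z (∑ l ∈ Finset.univ.erase j, γ l) := by
      rw [Fin.prod_univ_succ]
      have h0 : b (j.succ.succAbove 0) = σ := by
        rw [Fin.succ_succAbove_zero]; simp [hb]
      have hs : ∀ l : Fin n', b (j.succ.succAbove l.succ) = Pz z (γ (j.succAbove l)) := by
        intro l; rw [Fin.succ_succAbove_succ]; simp [hb]
      rw [h0, Finset.prod_congr rfl fun l _ => hs l]
      congr 1
      rw [← Pz_sum z (fun l => γ (j.succAbove l))]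
      congr 1
      exact (sum_erase_succAbove γ j).symm
    rw [hrest] at hi
    refine ⟨t, by omega, ?_⟩
    have key : dec u t = (∑ l ∈ Finset.univ.erase j, γ l) + dec (γ j) t := by
      funext s
      have happ : (∑ l ∈ Finset.univ.erase j, γ l) s = ∑ l ∈ Finset.univ.erase j, γ l s :=
        Finset.sum_apply s (Finset.univ.erase j) γ
      have husum : u s = γ j s + ∑ l ∈ Finset.univ.erase j, γ l s := by
        conv_lhs => rw [← hγsum]
        rw [Finset.sum_apply s Finset.univ γ]
        rw [← Finset.add_sum_erase Finset.univ (fun l => γ l s) (Finset.mem_univ j)]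
      by_cases hst : s = t
      · subst hst
        simp only [Pi.add_apply, dec, Function.update_self, happ]
        omega
      · simp only [Pi.add_apply, dec, Function.update_of_ne hst, happ]
        omega
    rw [key, Pz_add, ← mul_assoc]
    exact Ideal.mul_mem_right _ I hi

/-! ### The elimination game -/

theorem game {I : Ideal R} (u : Fin N → ℕ) (W : Finset (Fin N)) (hWne : W.Nonempty)
    (hCON : ∀ S : Finset (Fin N), S.Nonempty → S ⊆ W →
      (Pz z u ∈ I ∨ ∃ t ∈ W, u t ≠ 0 ∧ (∑ i ∈ S, z i) * Pz z (dec u t) ∈ I))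
    (hK : ∀ τ ∈ W, ∀ t' ∈ W, t' ≠ τ → u t' ≠ 0 → u t' ≤ u τ →
      z τ * Pz z (dec u t') ∈ I) :
    Pz z u ∈ I := by
  classical
  revert hWne hCON hK
  induction W using Finset.strongInduction with
  | _ W ih =>
    intro hWne hCON hK
    obtain ⟨τ, hτW, hτmax⟩ := Finset.exists_max_image W u hWne
    by_cases hW' : (W.erase τ).Nonempty
    · refine ih (W.erase τ) (Finset.erase_ssubset hτW) hW' ?_ ?_
      · intro S hSne hSW'
        have hSW : S ⊆ W := hSW'.trans (Finset.erase_subset _ _)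
        rcases hCON S hSne hSW with h | ⟨t, htW, htu, hc⟩
        · exact Or.inl h
        · by_cases ht : t = τ
          · subst ht
            have hτS : t ∉ S := fun hmem => (Finset.mem_erase.mp (hSW' hmem)).1 rfl
            rcases hCON (insert t S) (Finset.insert_nonempty _ _)
                (Finset.insert_subset htW hSW) with h | ⟨t', ht'W, ht'u, hc'⟩
            · exact Or.inl h
            · rw [Finset.sum_insert hτS, add_mul] at hc'
              by_cases ht' : t' = t
              · subst ht'
                left
                have hz : z t' * Pz z (dec u t') ∈ I := by
                  have hsub := I.sub_mem hc' hc
                  simpa using hsub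
                rwa [Pz_dec z u t' ht'u] at hz
              · have hz : z t * Pz z (dec u t') ∈ I :=
                  hK t htW t' ht'W ht' ht'u (hτmax t' ht'W)
                have hσ : (∑ i ∈ S, z i) * Pz z (dec u t') ∈ I := by
                  have hsub := I.sub_mem hc' hz
                  simpa using hsub
                exact Or.inr ⟨t', Finset.mem_erase.mpr ⟨ht', ht'W⟩, ht'u, hσ⟩
          · exact Or.inr ⟨t, Finset.mem_erase.mpr ⟨ht, htW⟩, htu, hc⟩
      · intro τ' hτ' t' ht' hne h0 hle
        exact hK τ' (Finset.mem_of_mem_erase hτ') t' (Finset.mem_of_mem_erase ht') hne h0 hle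
    · have hWs : W = {τ} := by
        rcases (Finset.erase_eq_empty_iff W τ).mp (Finset.not_nonempty_iff_eq_empty.mp hW')
          with h | h
        · exact absurd h (Finset.nonempty_iff_ne_empty.mp hWne)
        · exact h
      rcases hCON {τ} (Finset.singleton_nonempty τ) (by rw [hWs]) with h | ⟨t, htW, htu, hc⟩
      · exact h
      · have htτ : t = τ := by rw [hWs] at htW; simpa using htW
        subst htτ
        rw [Finset.sum_singleton] at hc
        rwa [Pz_dec z u t htu] at hc

/-! ### The measure -/

def psi (n : ℕ) (u : Fin N → ℕ) : ℕ := ∑ i, (n + 1) ^ u i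

theorem sum_split_two (f : Fin N → ℕ) {a b : Fin N} (h : a ≠ b) :
    ∑ i, f i = f a + f b + ∑ i ∈ (Finset.univ.erase a).erase b, f i := by
  rw [← Finset.add_sum_erase Finset.univ f (Finset.mem_univ a)]
  rw [← Finset.add_sum_erase (Finset.univ.erase a) f
    (Finset.mem_erase.mpr ⟨Ne.symm h, Finset.mem_univ b⟩)]
  omega

theorem psi_transfer {n : ℕ} (hn : 0 < n) (u : Fin N → ℕ) {τ t' : Fin N}
    (hne : t' ≠ τ) (h0 : u t' ≠ 0) (hle : u t' ≤ u τ) :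
    psi n u < psi n (inc (dec u t') τ) := by
  have hτt : τ ≠ t' := Ne.symm hne
  set v := inc (dec u t') τ with hv
  have hvτ : v τ = u τ + 1 := by
    simp [hv, inc, dec, Function.update_self, Function.update_of_ne hτt]
  have hvt : v t' = u t' - 1 := by
    simp [hv, inc, Function.update_of_ne hne, dec, Function.update_self]
  have hvo : ∀ s, s ≠ τ → s ≠ t' → v s = u s := by
    intro s h1 h2
    simp [hv, inc, dec, Function.update_of_ne h1, Function.update_of_ne h2]
  unfold psi
  rw [sum_split_two (fun i => (n + 1) ^ u i) hτt, sum_split_two (fun i => (n + 1) ^ v i) hτt]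
  have hrest : ∑ i ∈ (Finset.univ.erase τ).erase t', (n + 1) ^ v i
      = ∑ i ∈ (Finset.univ.erase τ).erase t', (n + 1) ^ u i := by
    refine Finset.sum_congr rfl fun i hi => ?_
    have h1 := Finset.mem_erase.mp hi
    have h2 := Finset.mem_erase.mp h1.2
    rw [hvo i h2.1 h1.1]
  rw [hvτ, hvt, hrest]
  have hlt : (n + 1) ^ (u t' - 1) < (n + 1) ^ u τ :=
    Nat.pow_lt_pow_right (by omega) (by omega)
  have e1 : (n + 1) ^ (u τ + 1) = (n + 1) ^ u τ * (n + 1) := pow_succ _ _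
  have e2 : (n + 1) ^ u t' = (n + 1) ^ (u t' - 1) * (n + 1) := by
    rw [← pow_succ]; congr 1; omega
  rw [e1, e2]
  nlinarith [hlt]

/-! ### The main induction -/

theorem main {I : Ideal R} {n : ℕ} (hn : 0 < n) (hI : IsNAbsorbing I n)
    (hz : ∀ i, z i ∈ I.radical) :
    ∀ u : Fin N → ℕ, n ≤ ∑ j, u j → Pz z u ∈ I := by
  classical
  have hbigcase : ∀ u : Fin N → ℕ, (∃ i, n ≤ u i) → Pz z u ∈ I := by
    rintro u ⟨i, hi⟩
    rw [Pz_split z u i]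
    have hp : z i ^ u i = z i ^ n * z i ^ (u i - n) := by
      rw [← pow_add]; congr 1; omega
    rw [hp, mul_assoc]
    exact Ideal.mul_mem_right _ I (pow_mem_of_mem_radical hn hI (hz i))
  have hsmallsum : ∀ u : Fin N → ℕ, (∀ i, u i < n) → ∑ j, u j ≤ N * (n - 1) := by
    intro u hu
    calc ∑ j, u j ≤ ∑ _j : Fin N, (n - 1) := Finset.sum_le_sum fun j _ => by
          have := hu j; omega
      _ = N * (n - 1) := by
          rw [Finset.sum_const, Finset.card_univ, Fintype.card_fin, smul_eq_mul]
  suffices H : ∀ s p : ℕ, ∀ u : Fin N → ℕ,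
      N * (n - 1) + 1 ≤ (∑ j, u j) + s → N * (n + 1) ^ n ≤ psi n u + p →
      n ≤ ∑ j, u j → Pz z u ∈ I by
    intro u hu
    exact H (N * (n - 1) + 1) (N * (n + 1) ^ n) u (by omega) (by omega) hu
  intro s
  induction s with
  | zero =>
    intro p u h1 _ h3
    apply hbigcase
    by_contra hc
    push_neg at hc
    have := hsmallsum u hc
    omega
  | succ s ihs =>
    intro p
    induction p with
    | zero =>
      intro u h1 h2 h3
      apply hbigcase
      by_contra hc
      push_neg at hc
      have hψ : psi n u ≤ N * (n + 1) ^ (n - 1) := by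
        calc psi n u ≤ ∑ _i : Fin N, (n + 1) ^ (n - 1) :=
              Finset.sum_le_sum fun i _ =>
                Nat.pow_le_pow_right (by omega) (by have := hc i; omega)
          _ = N * (n + 1) ^ (n - 1) := by
              rw [Finset.sum_const, Finset.card_univ, Fintype.card_fin, smul_eq_mul]
      have hpow : N * (n + 1) ^ n = (N * (n + 1) ^ (n - 1)) * (n + 1) := by
        rw [mul_assoc, ← pow_succ]
        congr 2
        omega
      have hx2 : (N * (n + 1) ^ (n - 1)) * 2 ≤ (N * (n + 1) ^ (n - 1)) * (n + 1) :=
        Nat.mul_le_mul_left _ (by omega)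
      have hN0 : N * (n + 1) ^ (n - 1) = 0 := by omega
      have hN : N = 0 := by
        rcases Nat.mul_eq_zero.mp hN0 with h | h
        · exact h
        · exact absurd h (pow_pos (by omega : 0 < n + 1) _).ne'
      subst hN
      simp only [Finset.univ_eq_empty, Finset.sum_empty] at h3
      omega
    | succ p ihp =>
      intro u h1 h2 h3
      by_cases hbig : ∃ i, n ≤ u i
      · exact hbigcase u hbig
      push_neg at hbig
      set W : Finset (Fin N) := Finset.univ.filter (fun i => u i ≠ 0) with hW
      have hWmem : ∀ t, t ∈ W ↔ u t ≠ 0 := by intro t; simp [hW]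
      have hWne : W.Nonempty := by
        have hex : ∃ i, u i ≠ 0 := by
          by_contra hcc
          push_neg at hcc
          have hz0 : ∑ j, u j = 0 := Finset.sum_eq_zero fun j _ => hcc j
          omega
        obtain ⟨i, hi⟩ := hex
        exact ⟨i, (hWmem i).mpr hi⟩
      have hup : ∀ i, Pz z (inc u i) ∈ I := by
        intro i
        have hsi := sum_inc u i
        exact ihs (N * (n + 1) ^ n) (inc u i) (by omega) (by omega) (by omega)
      have hprod : ∀ S : Finset (Fin N), (∑ i ∈ S, z i) * Pz z u ∈ I := by
        intro S
        rw [Finset.sum_mul]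
        refine Ideal.sum_mem I fun i _ => ?_
        rw [← Pz_inc]
        exact hup i
      have hK : ∀ τ ∈ W, ∀ t' ∈ W, t' ≠ τ → u t' ≠ 0 → u t' ≤ u τ →
          z τ * Pz z (dec u t') ∈ I := by
        intro τ hτ t' ht' hne h0 hle
        rw [← Pz_inc]
        have hsd := sum_dec u t' h0
        have hsi := sum_inc (dec u t') τ
        have hψ := psi_transfer hn u hne h0 hle
        exact ihp (inc (dec u t') τ) (by omega) (by omega) (by omega)
      refine game z u W hWne ?_ hK
      intro S hSne hSW
      rcases con z hn hI u h3 S (hprod S) with h | ⟨t, htu, hc⟩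
      · exact Or.inl h
      · exact Or.inr ⟨t, (hWmem t).mpr htu, htu, hc⟩

end NAbsorbingAux

theorem radical_pow_le_of_nAbsorbing {R : Type*} [CommRing R] (n : ℕ) (hn : 0 < n)
    (I : Ideal R) (hI : IsNAbsorbing I n) : I.radical ^ n ≤ I := by
  classical
  have key : ∀ f : Fin n → R, (∀ i, f i ∈ I.radical) → (∏ i, f i) ∈ I := by
    intro f hf
    have hm := NAbsorbingAux.main f hn hI hf (fun _ => 1) (by simp)
    simpa [NAbsorbingAux.Pz] using hm
  have pow_le : ∀ (m : ℕ) (K : Ideal R),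
      (∀ f : Fin m → R, (∀ i, f i ∈ I.radical) → (∏ i, f i) ∈ K) → I.radical ^ m ≤ K := by
    intro m
    induction m with
    | zero =>
      intro K h
      have h1 : (1 : R) ∈ K := by simpa using h (fun _ => 1) (fun i => i.elim0)
      rw [pow_zero, Ideal.one_eq_top]
      exact ((Ideal.eq_top_iff_one K).mpr h1).ge
    | succ m ih =>
      intro K h
      rw [pow_succ]
      refine Ideal.mul_le.mpr fun a ha b hb => ?_
      have hmem := ih (K.colon (Submodule.span R {b})) ?_ ha
      · rwa [Submodule.mem_colon_span_singleton, smul_eq_mul] at hmem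
      · intro f hf
        rw [Submodule.mem_colon_span_singleton, smul_eq_mul]
        have hcons := h (Fin.cons b f) ?_
        · rw [Fin.prod_univ_succ] at hcons
          simpa [Fin.cons_zero, Fin.cons_succ, mul_comm] using hcons
        · intro i
          rcases Fin.eq_zero_or_eq_succ i with rfl | ⟨j, rfl⟩
          · simpa using hb
          · simpa [Fin.cons_succ] using hf j
  exact pow_le n I key
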